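/- Let A : E → E be a self-adjoint linear map on an n-dimensional real inner product space, diagonalized in an orthonormal basis {e_j} with eigenvalues λ_j, where λ_j > 0 for j ≤ p and λ_j < 0 for j > p. Then the element e^{p+1} ∧ e^{p+2} ∧ ⋯ ∧ e^n of Λ*E^* lies in the kernel of K = tr|A|·id + Σ_j λ_j c(e_j)ĉ(e_j). -/

import Mathlib

/- We model the exterior algebra `Λ*E^*` of a finite-dimensional real inner product
space `E` by `ExteriorAlgebra ℝ E`, identifying `E ≅ E^*` via the inner product.
`extMul v` is exterior multiplication by `v^*` and `intMul v` is interior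
multiplication (contraction) by `v`. -/

open ExteriorAlgebra RealInnerProductSpace

variable {E : Type*} [NormedAddCommGroup E] [InnerProductSpace ℝ E] [FiniteDimensional ℝ E]

/-- Exterior multiplication `v^* ∧ ·` on `Λ*E^*` (under `E ≅ E^*`). -/
noncomputable def extMul (v : E) : ExteriorAlgebra ℝ E →ₗ[ℝ] ExteriorAlgebra ℝ E :=
  LinearMap.mulLeft ℝ (ExteriorAlgebra.ι ℝ v)

/-- Interior multiplication (contraction) `ι_v` on `Λ*E^*`. -/
noncomputable def intMul (v : E) : ExteriorAlgebra ℝ E →ₗ[ℝ] ExteriorAlgebra ℝ E :=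
  CliffordAlgebra.contractLeft ((innerSL ℝ v).toLinearMap)

/-- The Clifford action `c(v) = v^* ∧ · - ι_v`. -/
noncomputable def cl (v : E) : ExteriorAlgebra ℝ E →ₗ[ℝ] ExteriorAlgebra ℝ E :=
  extMul v - intMul v

/-- The Clifford action `ĉ(v) = v^* ∧ · + ι_v`. -/
noncomputable def hcl (v : E) : ExteriorAlgebra ℝ E →ₗ[ℝ] ExteriorAlgebra ℝ E :=
  extMul v + intMul v

/-- The wedge product `v 0 ∧ v 1 ∧ ⋯ ∧ v (k-1)` in the exterior algebra. -/
noncomputable def wedgeList {k : ℕ} (v : Fin k → E) : ExteriorAlgebra ℝ E :=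
  (List.ofFn fun i => ExteriorAlgebra.ι ℝ (v i)).prod


section Aux

set_option linter.unusedSectionVars false

lemma intMul_ι_mul (v a : E) (x : ExteriorAlgebra ℝ E) :
    intMul v (ExteriorAlgebra.ι ℝ a * x)
      = (inner ℝ v a : ℝ) • x - ExteriorAlgebra.ι ℝ a * intMul v x :=
  CliffordAlgebra.contractLeft_ι_mul _ a x

lemma intMul_one (v : E) : intMul v (1 : ExteriorAlgebra ℝ E) = 0 :=
  CliffordAlgebra.contractLeft_one _ _

lemma intMul_intMul (v : E) (x : ExteriorAlgebra ℝ E) : intMul v (intMul v x) = 0 :=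
  CliffordAlgebra.contractLeft_contractLeft _ x

lemma intMul_prod_eq_zero (v : E) (l : List E) (h : ∀ w ∈ l, (inner ℝ v w : ℝ) = 0) :
    intMul v (l.map (ExteriorAlgebra.ι ℝ)).prod = 0 := by
  induction l with
  | nil => simpa using intMul_one v
  | cons a t ih =>
    rw [List.map_cons, List.prod_cons, intMul_ι_mul,
      h a (List.mem_cons_self), ih (fun w hw => h w (List.mem_cons_of_mem a hw))]
    simp

lemma clhcl_of_ext_zero (u : E) (hu : (inner ℝ u u : ℝ) = 1) (x : ExteriorAlgebra ℝ E)
    (hx : extMul u x = 0) : (cl u ∘ₗ hcl u) x = x := by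
  have hext : (ExteriorAlgebra.ι ℝ u) * x = 0 := hx
  have h := intMul_ι_mul u u x
  rw [hext, map_zero, hu, one_smul] at h
  have h2 : ExteriorAlgebra.ι ℝ u * intMul u x = x := (sub_eq_zero.mp h.symm).symm
  simp only [cl, hcl, LinearMap.comp_apply, LinearMap.add_apply, LinearMap.sub_apply, hx,
    zero_add, intMul_intMul, sub_zero]
  exact h2

lemma clhcl_of_int_zero (u : E) (hu : (inner ℝ u u : ℝ) = 1) (x : ExteriorAlgebra ℝ E)
    (hx : intMul u x = 0) : (cl u ∘ₗ hcl u) x = -x := by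
  have hee : extMul u (extMul u x) = 0 := by
    simp only [extMul, LinearMap.mulLeft_apply, ← mul_assoc, ExteriorAlgebra.ι_sq_zero, zero_mul]
  have h := intMul_ι_mul u u x
  rw [hu, one_smul, hx, mul_zero, sub_zero] at h
  simp only [cl, hcl, LinearMap.comp_apply, LinearMap.add_apply, LinearMap.sub_apply, hx,
    add_zero, hee, zero_sub]
  rw [show intMul u (extMul u x) = x from h]

end Aux

/-- Let `A` be self-adjoint, diagonalized in an orthonormal basis `{e_j}` with
eigenvalues `λ_j`, positive for `j ≤ p` and negative for `j > p` (here `0`-indexed: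
positive for `j < p`, negative for `j ≥ p`).  Then `e^{p+1} ∧ ⋯ ∧ e^n` lies in the
kernel of `K = tr|A|·id + Σ_j λ_j c(e_j)ĉ(e_j)`. -/
theorem top_negative_wedge_mem_ker {n p : ℕ} (hp : p ≤ n)
    (e : OrthonormalBasis (Fin n) ℝ E) (A : E →ₗ[ℝ] E) (hA : A.IsSymmetric)
    (lam : Fin n → ℝ) (hdiag : ∀ j, A (e j) = lam j • e j)
    (hpos : ∀ j : Fin n, (j : ℕ) < p → 0 < lam j)
    (hneg : ∀ j : Fin n, p ≤ (j : ℕ) → lam j < 0) :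
    ((∑ j, |lam j|) • (LinearMap.id : ExteriorAlgebra ℝ E →ₗ[ℝ] ExteriorAlgebra ℝ E)
        + ∑ j, lam j • (cl (e j) ∘ₗ hcl (e j)))
      (wedgeList fun i : Fin (n - p) => e ⟨p + (i : ℕ), by have := i.isLt; omega⟩) = 0 := by
  have horth := orthonormal_iff_ite.mp e.orthonormal
  set v : Fin (n - p) → E := fun i : Fin (n - p) =>
    e ⟨p + (i : ℕ), by have := i.isLt; omega⟩ with hv
  set ω : ExteriorAlgebra ℝ E := wedgeList v with hω
  have key : ∀ j : Fin n, lam j • ((cl (e j) ∘ₗ hcl (e j)) ω) = (-|lam j|) • ω := by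
    intro j
    have hujj : (inner ℝ (e j) (e j) : ℝ) = 1 := by simpa using horth j j
    rcases lt_or_ge (j : ℕ) p with hj | hj
    · -- j < p : e j orthogonal to all factors, intMul vanishes
      have hint : intMul (e j) ω = 0 := by
        have : ω = ((List.ofFn v).map (ExteriorAlgebra.ι ℝ)).prod := by
          rw [hω, wedgeList, List.map_ofFn]; rfl
        rw [this]
        refine intMul_prod_eq_zero _ _ ?_
        intro w hw
        obtain ⟨i, rfl⟩ := List.mem_ofFn.mp hw
        have hne : j ≠ (⟨p + (i : ℕ), by have := i.isLt; omega⟩ : Fin n) := by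
          intro hEq
          have : (j : ℕ) = p + (i : ℕ) := by rw [hEq]
          omega
        have h := horth j ⟨p + (i : ℕ), by have := i.isLt; omega⟩
        rw [if_neg hne] at h
        exact h
      rw [clhcl_of_int_zero _ hujj _ hint, smul_neg, ← neg_smul]
      rw [abs_of_pos (hpos j hj)]
    · -- p ≤ j : e j is one of the factors, extMul vanishes
      have hi : (j : ℕ) - p < n - p := by have := j.isLt; omega
      have hext : extMul (e j) ω = 0 := by
        have h0 : e j = v ⟨(j : ℕ) - p, hi⟩ := by
          congr 1
          ext
          simp
          omega
        rw [hω, wedgeList]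
        show ExteriorAlgebra.ι ℝ (e j) * _ = 0
        rw [h0]
        exact ExteriorAlgebra.ι_mul_prod_list v ⟨(j : ℕ) - p, hi⟩
      rw [clhcl_of_ext_zero _ hujj _ hext, abs_of_neg (hneg j hj), neg_neg]
  simp only [LinearMap.add_apply, LinearMap.smul_apply, LinearMap.id_apply,
    LinearMap.sum_apply]
  rw [show (∑ x, lam x • (cl (e x) ∘ₗ hcl (e x)) ω) = ∑ x, (-|lam x|) • ω from
      Finset.sum_congr rfl fun j _ => key j, ← Finset.sum_smul, ← add_smul]
  rw [show ((∑ j, |lam j|) + ∑ x : Fin n, -|lam x|) = 0 by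
      rw [Finset.sum_neg_distrib, add_neg_cancel], zero_smul]
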